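/- Let A ∈ ℝ^{n×N}, τ, λ > 0, Y ∈ ℝ^{n×m}, L ≥ 2, and B_out > 0. Then for any orthogonal matrices Φ₁, Φ₂, Ψ₁, Ψ₂ ∈ O(N), ‖σ(Ψ₁ f_{Φ₁}^L(Y)) − σ(Ψ₂ f_{Φ₂}^L(Y))‖_F ≤ M_L·‖Ψ₁ − Ψ₂‖_{2→2} + K_L·‖AΦ₁ − AΦ₂‖_{2→2}, where M_L = τ‖A‖_{2→2}‖Y‖_F · Σ_{k=0}^{L−1} ‖I − τAᵀA‖_{2→2}^k and K_L = τ‖Y‖_F‖I − τAᵀA‖_{2→2}^{L−1} + τ‖Y‖_F Σ_{l=2}^{L} ‖I − τAᵀA‖_{2→2}^{L−l}(1 + 2τ‖A‖²_{2→2} Σ_{k=0}^{l−2} ‖I − τAᵀA‖_{2→2}^k), and σ is applied columnwise. -/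

import Mathlib

open MeasureTheory Matrix
open scoped ENNReal

noncomputable def soft (mu x : ℝ) : ℝ := Real.sign x * max 0 (|x| - mu)

noncomputable def softMat {a b : ℕ} (mu : ℝ) (M : Matrix (Fin a) (Fin b) ℝ) :
    Matrix (Fin a) (Fin b) ℝ := Matrix.of fun i j => soft mu (M i j)

noncomputable def specNorm {a b : ℕ} (A : Matrix (Fin a) (Fin b) ℝ) : ℝ :=
  ‖LinearMap.toContinuousLinearMap (Matrix.toEuclideanLin A)‖

noncomputable def frobNorm {a b : ℕ} (A : Matrix (Fin a) (Fin b) ℝ) : ℝ :=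
  Real.sqrt (∑ i, ∑ j, (A i j) ^ 2)

noncomputable def l2 {N : ℕ} (x : Fin N → ℝ) : ℝ := Real.sqrt (∑ i, x i ^ 2)

-- bridging lemmas
lemma l2_eq_norm {N : ℕ} (x : Fin N → ℝ) :
    l2 x = ‖(WithLp.equiv 2 (Fin N → ℝ)).symm x‖ := by
  rw [EuclideanSpace.norm_eq]
  simp [l2, sq_abs]

lemma l2_nonneg {N : ℕ} (x : Fin N → ℝ) : 0 ≤ l2 x := Real.sqrt_nonneg _

lemma l2_sq {N : ℕ} (x : Fin N → ℝ) : l2 x ^ 2 = ∑ i, x i ^ 2 :=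
  Real.sq_sqrt (Finset.sum_nonneg fun i _ => sq_nonneg _)

lemma specNorm_nonneg {a b : ℕ} (M : Matrix (Fin a) (Fin b) ℝ) : 0 ≤ specNorm M :=
  norm_nonneg _

lemma l2_mulVec_le {a b : ℕ} (M : Matrix (Fin a) (Fin b) ℝ) (x : Fin b → ℝ) :
    l2 (M *ᵥ x) ≤ specNorm M * l2 x := by
  rw [l2_eq_norm, l2_eq_norm]
  have h := (LinearMap.toContinuousLinearMap (Matrix.toEuclideanLin M)).le_opNorm
      ((WithLp.equiv 2 (Fin b → ℝ)).symm x)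
  simpa [Matrix.toEuclideanLin_apply_piLp_toLp, specNorm] using h

lemma specNorm_le_bound {a b : ℕ} (M : Matrix (Fin a) (Fin b) ℝ) {C : ℝ} (hC : 0 ≤ C)
    (h : ∀ x, l2 (M *ᵥ x) ≤ C * l2 x) : specNorm M ≤ C := by
  refine ContinuousLinearMap.opNorm_le_bound _ hC fun v => ?_
  have h2 := h ((WithLp.equiv 2 (Fin b → ℝ)) v)
  rw [l2_eq_norm, l2_eq_norm] at h2
  simpa [Matrix.toEuclideanLin_apply] using h2

lemma specNorm_mul_le {a b c : ℕ} (M : Matrix (Fin a) (Fin b) ℝ) (P : Matrix (Fin b) (Fin c) ℝ) :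
    specNorm (M * P) ≤ specNorm M * specNorm P := by
  refine specNorm_le_bound _ (mul_nonneg (specNorm_nonneg _) (specNorm_nonneg _)) fun x => ?_
  rw [← Matrix.mulVec_mulVec]
  calc l2 (M *ᵥ (P *ᵥ x)) ≤ specNorm M * l2 (P *ᵥ x) := l2_mulVec_le _ _
    _ ≤ specNorm M * (specNorm P * l2 x) :=
        mul_le_mul_of_nonneg_left (l2_mulVec_le _ _) (specNorm_nonneg _)
    _ = specNorm M * specNorm P * l2 x := by ring

lemma specNorm_add_le {a b : ℕ} (M P : Matrix (Fin a) (Fin b) ℝ) :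
    specNorm (M + P) ≤ specNorm M + specNorm P := by
  unfold specNorm
  rw [map_add, map_add]
  exact norm_add_le _ _

lemma specNorm_smul {a b : ℕ} (c : ℝ) (M : Matrix (Fin a) (Fin b) ℝ) :
    specNorm (c • M) = |c| * specNorm M := by
  unfold specNorm
  rw [_root_.map_smul, _root_.map_smul]
  exact (norm_smul c (LinearMap.toContinuousLinearMap (Matrix.toEuclideanLin M))).trans
    (by rw [Real.norm_eq_abs])

lemma specNorm_neg {a b : ℕ} (M : Matrix (Fin a) (Fin b) ℝ) :
    specNorm (-M) = specNorm M := by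
  unfold specNorm
  rw [map_neg, map_neg, norm_neg]

lemma specNorm_transpose {a b : ℕ} (M : Matrix (Fin a) (Fin b) ℝ) :
    specNorm Mᵀ = specNorm M := by
  have h : Mᵀ = Mᴴ := by
    ext i j; simp [Matrix.conjTranspose_apply]
  rw [h]
  unfold specNorm
  rw [Matrix.toEuclideanLin_conjTranspose_eq_adjoint, LinearMap.adjoint_toContinuousLinearMap]
  exact (ContinuousLinearMap.adjoint : _ ≃ₗᵢ⋆[ℝ] _).norm_map _

lemma frob_eq_norm {a b : ℕ} (M : Matrix (Fin a) (Fin b) ℝ) :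
    frobNorm M = ‖(WithLp.equiv 2 (Fin a × Fin b → ℝ)).symm (fun p => M p.1 p.2)‖ := by
  rw [EuclideanSpace.norm_eq]
  simp [frobNorm, Fintype.sum_prod_type, sq_abs]

lemma frob_nonneg {a b : ℕ} (M : Matrix (Fin a) (Fin b) ℝ) : 0 ≤ frobNorm M :=
  Real.sqrt_nonneg _

lemma frob_zero {a b : ℕ} : frobNorm (0 : Matrix (Fin a) (Fin b) ℝ) = 0 := by
  simp [frobNorm]

lemma frob_add_le {a b : ℕ} (M P : Matrix (Fin a) (Fin b) ℝ) :
    frobNorm (M + P) ≤ frobNorm M + frobNorm P := by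
  rw [frob_eq_norm, frob_eq_norm, frob_eq_norm]
  have : (WithLp.equiv 2 (Fin a × Fin b → ℝ)).symm (fun p => (M + P) p.1 p.2) =
      (WithLp.equiv 2 (Fin a × Fin b → ℝ)).symm (fun p => M p.1 p.2) +
      (WithLp.equiv 2 (Fin a × Fin b → ℝ)).symm (fun p => P p.1 p.2) := rfl
  rw [this]
  exact norm_add_le _ _

lemma frob_smul {a b : ℕ} (c : ℝ) (M : Matrix (Fin a) (Fin b) ℝ) :
    frobNorm (c • M) = |c| * frobNorm M := by
  rw [frob_eq_norm, frob_eq_norm]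
  have : (WithLp.equiv 2 (Fin a × Fin b → ℝ)).symm (fun p => (c • M) p.1 p.2) =
      c • (WithLp.equiv 2 (Fin a × Fin b → ℝ)).symm (fun p => M p.1 p.2) := rfl
  rw [this, norm_smul, Real.norm_eq_abs]

lemma frob_eq_cols {a b : ℕ} (M : Matrix (Fin a) (Fin b) ℝ) :
    frobNorm M = Real.sqrt (∑ j, (l2 fun i => M i j) ^ 2) := by
  unfold frobNorm
  rw [Finset.sum_comm]
  congr 1
  exact Finset.sum_congr rfl fun j _ => (l2_sq _).symm

lemma frob_mul_le {a b c : ℕ} (M : Matrix (Fin a) (Fin b) ℝ) (X : Matrix (Fin b) (Fin c) ℝ) :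
    frobNorm (M * X) ≤ specNorm M * frobNorm X := by
  rw [frob_eq_cols, frob_eq_cols]
  have key : ∀ j, (l2 fun i => (M * X) i j) ^ 2 ≤ specNorm M ^ 2 * (l2 fun i => X i j) ^ 2 := by
    intro j
    have hcol : (fun i => (M * X) i j) = M *ᵥ (fun k => X k j) := by
      ext i; simp [Matrix.mul_apply, Matrix.mulVec, dotProduct]
    rw [hcol, ← mul_pow]
    exact pow_le_pow_left₀ (l2_nonneg _) (l2_mulVec_le _ _) 2
  calc Real.sqrt (∑ j, (l2 fun i => (M * X) i j) ^ 2)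
      ≤ Real.sqrt (∑ j, specNorm M ^ 2 * (l2 fun i => X i j) ^ 2) :=
        Real.sqrt_le_sqrt (Finset.sum_le_sum fun j _ => key j)
    _ = specNorm M * Real.sqrt (∑ j, (l2 fun i => X i j) ^ 2) := by
        rw [← Finset.mul_sum, Real.sqrt_mul (sq_nonneg _), Real.sqrt_sq (specNorm_nonneg _)]

lemma l2_mulVec_orth {N : ℕ} {Φ : Matrix (Fin N) (Fin N) ℝ} (hΦ : Φᵀ * Φ = 1)
    (x : Fin N → ℝ) : l2 (Φ *ᵥ x) = l2 x := by
  unfold l2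
  congr 1
  have h1 : ∑ i, (Φ *ᵥ x) i ^ 2 = (Φ *ᵥ x) ⬝ᵥ (Φ *ᵥ x) := by
    simp [dotProduct, sq]
  have h2 : ∑ i, x i ^ 2 = x ⬝ᵥ x := by simp [dotProduct, sq]
  rw [h1, h2, Matrix.dotProduct_mulVec]
  congr 1
  have : (Φ *ᵥ x) = x ᵥ* Φᵀ := by rw [← Matrix.mulVec_transpose, Matrix.transpose_transpose]
  rw [this, Matrix.vecMul_vecMul, hΦ, Matrix.vecMul_one]

lemma frob_orth_mul {N c : ℕ} {Φ : Matrix (Fin N) (Fin N) ℝ} (hΦ : Φᵀ * Φ = 1)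
    (X : Matrix (Fin N) (Fin c) ℝ) : frobNorm (Φ * X) = frobNorm X := by
  rw [frob_eq_cols, frob_eq_cols]
  congr 1
  refine Finset.sum_congr rfl fun j _ => ?_
  have hcol : (fun i => (Φ * X) i j) = Φ *ᵥ (fun k => X k j) := by
    ext i; simp [Matrix.mul_apply, Matrix.mulVec, dotProduct]
  rw [hcol, l2_mulVec_orth hΦ]

lemma soft_eq_clamp {mu : ℝ} (hmu : 0 ≤ mu) (x : ℝ) :
    soft mu x = x - max (-mu) (min mu x) := by
  unfold soft
  rcases lt_trichotomy x 0 with h | h | h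
  · rw [Real.sign_of_neg h, abs_of_neg h, min_eq_right (le_trans h.le hmu)]
    rcases le_total x (-mu) with h2 | h2
    · rw [max_eq_left h2, max_eq_right (by linarith)]; ring
    · rw [max_eq_right h2, max_eq_left (by linarith)]; ring
  · subst h
    rw [Real.sign_zero, min_eq_right hmu, max_eq_right (neg_nonpos.2 hmu)]
    ring
  · rw [Real.sign_of_pos h, abs_of_pos h]
    rcases le_total mu x with h2 | h2
    · rw [min_eq_left h2, max_eq_right (by linarith), max_eq_right (by linarith)]; ring
    · rw [min_eq_right h2, max_eq_left (by linarith), max_eq_right (by linarith)]; ring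

lemma soft_zero (mu : ℝ) : soft mu 0 = 0 := by simp [soft]

lemma abs_soft_sub_le {mu : ℝ} (hmu : 0 ≤ mu) (x y : ℝ) :
    |soft mu x - soft mu y| ≤ |x - y| := by
  have clamp_abs : ∀ u v : ℝ, |max (-mu) (min mu u) - max (-mu) (min mu v)| ≤ |u - v| := by
    intro u v
    calc |max (-mu) (min mu u) - max (-mu) (min mu v)|
        = |max (min mu u) (-mu) - max (min mu v) (-mu)| := by rw [max_comm, max_comm (-mu)]
      _ ≤ |min mu u - min mu v| := abs_max_sub_max_le_abs _ _ _
      _ ≤ max |mu - mu| |u - v| := abs_min_sub_min_le_max _ _ _ _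
      _ = |u - v| := by simp
  have clamp_mono : ∀ u v : ℝ, v ≤ u →
      max (-mu) (min mu v) ≤ max (-mu) (min mu u) := fun u v h =>
    max_le_max le_rfl (min_le_min le_rfl h)
  rcases le_total y x with h | h
  · have h1 := clamp_mono x y h
    have h2 := (abs_le.mp (clamp_abs x y)).2
    rw [abs_of_nonneg (by linarith : (0:ℝ) ≤ x - y)] at h2 ⊢
    rw [soft_eq_clamp hmu, soft_eq_clamp hmu, abs_le]
    constructor <;> linarith
  · have h1 := clamp_mono y x h
    have h2 := (abs_le.mp (clamp_abs y x)).2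
    rw [abs_sub_comm, abs_sub_comm x y]
    rw [abs_of_nonneg (by linarith : (0:ℝ) ≤ y - x)] at h2 ⊢
    rw [soft_eq_clamp hmu, soft_eq_clamp hmu, abs_le]
    constructor <;> linarith

lemma frob_softMat_sub {a b : ℕ} {mu : ℝ} (hmu : 0 ≤ mu) (P Q : Matrix (Fin a) (Fin b) ℝ) :
    frobNorm (softMat mu P - softMat mu Q) ≤ frobNorm (P - Q) := by
  unfold frobNorm
  apply Real.sqrt_le_sqrt
  refine Finset.sum_le_sum fun i _ => Finset.sum_le_sum fun j _ => ?_
  have h := abs_soft_sub_le hmu (P i j) (Q i j)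
  calc ((softMat mu P - softMat mu Q) i j) ^ 2
      = |soft mu (P i j) - soft mu (Q i j)| ^ 2 := by
        simp [softMat, Matrix.sub_apply, sq_abs]
    _ ≤ |P i j - Q i j| ^ 2 := pow_le_pow_left₀ (abs_nonneg _) h 2
    _ = ((P - Q) i j) ^ 2 := by simp [sq_abs, Matrix.sub_apply]

lemma frob_softMat {a b : ℕ} {mu : ℝ} (hmu : 0 ≤ mu) (P : Matrix (Fin a) (Fin b) ℝ) :
    frobNorm (softMat mu P) ≤ frobNorm P := by
  have h0 : softMat mu (0 : Matrix (Fin a) (Fin b) ℝ) = 0 := by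
    ext i j; simp [softMat, soft_zero]
  have := frob_softMat_sub hmu P 0
  rw [h0, sub_zero, sub_zero] at this
  exact this

noncomputable def sigma {N : ℕ} (B : ℝ) (x : Fin N → ℝ) : Fin N → ℝ :=
  if l2 x ≤ B then x else (B / l2 x) • x

noncomputable def sigmaMat {N m : ℕ} (B : ℝ) (M : Matrix (Fin N) (Fin m) ℝ) :
    Matrix (Fin N) (Fin m) ℝ := Matrix.of fun i j => sigma B (fun k => M k j) i

lemma scalar_key {a b t sx sy : ℝ} (ha : 0 ≤ a) (hb : 0 ≤ b)
    (hsx0 : 0 ≤ sx) (hsx1 : sx ≤ 1) (hsy0 : 0 ≤ sy) (hsy1 : sy ≤ 1)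
    (ht : t ≤ a * b) (hpq : (sx * a - sy * b) ^ 2 ≤ (a - b) ^ 2) :
    sx ^ 2 * a ^ 2 + sy ^ 2 * b ^ 2 - 2 * (sx * sy) * t ≤ a ^ 2 + b ^ 2 - 2 * t := by
  have h1 : 0 ≤ 1 - sx * sy := by
    have := mul_le_one₀ hsx1 hsy0 hsy1
    linarith
  rcases le_or_gt 0 t with htpos | htneg
  · have h3 : 0 ≤ (1 - sx * sy) * (a * b - t) := mul_nonneg h1 (by linarith)
    nlinarith [hpq, h3]
  · have hsx2 : sx ^ 2 ≤ 1 := by nlinarith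
    have hsy2 : sy ^ 2 ≤ 1 := by nlinarith
    have hA : sx ^ 2 * a ^ 2 ≤ 1 * a ^ 2 := mul_le_mul_of_nonneg_right hsx2 (sq_nonneg a)
    have hB : sy ^ 2 * b ^ 2 ≤ 1 * b ^ 2 := mul_le_mul_of_nonneg_right hsy2 (sq_nonneg b)
    have hT : 0 ≤ (1 - sx * sy) * (0 - t) := mul_nonneg h1 (by linarith)
    nlinarith [hA, hB, hT]

lemma sigma_lip {N : ℕ} {B : ℝ} (hB : 0 < B) (x y : Fin N → ℝ) :
    l2 (sigma B x - sigma B y) ≤ l2 (x - y) := by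
  set sx : ℝ := if l2 x ≤ B then 1 else B / l2 x with hsx_def
  set sy : ℝ := if l2 y ≤ B then 1 else B / l2 y with hsy_def
  have hx : sigma B x = sx • x := by
    rw [hsx_def]; unfold sigma; split_ifs with h
    · rw [one_smul]
    · rfl
  have hy : sigma B y = sy • y := by
    rw [hsy_def]; unfold sigma; split_ifs with h
    · rw [one_smul]
    · rfl
  set a := l2 x with ha_def
  set b := l2 y with hb_def
  have ha : 0 ≤ a := l2_nonneg x
  have hb : 0 ≤ b := l2_nonneg y
  have hsx0 : 0 ≤ sx := by
    rw [hsx_def]; split_ifs with h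
    · norm_num
    · positivity
  have hsy0 : 0 ≤ sy := by
    rw [hsy_def]; split_ifs with h
    · norm_num
    · positivity
  have hsx1 : sx ≤ 1 := by
    rw [hsx_def]; split_ifs with h
    · exact le_refl 1
    · push_neg at h
      rw [div_le_one (lt_trans hB h)]
      linarith
  have hsy1 : sy ≤ 1 := by
    rw [hsy_def]; split_ifs with h
    · exact le_refl 1
    · push_neg at h
      rw [div_le_one (lt_trans hB h)]
      linarith
  have hp : sx * a = min a B := by
    rw [hsx_def]; split_ifs with h
    · rw [one_mul, min_eq_left h]
    · push_neg at h
      rw [div_mul_cancel₀ _ (ne_of_gt (lt_trans hB h)), min_eq_right h.le]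
  have hq : sy * b = min b B := by
    rw [hsy_def]; split_ifs with h
    · rw [one_mul, min_eq_left h]
    · push_neg at h
      rw [div_mul_cancel₀ _ (ne_of_gt (lt_trans hB h)), min_eq_right h.le]
  -- Cauchy-Schwarz
  set t := ∑ i, x i * y i with ht_def
  have hCS : t ^ 2 ≤ (∑ i, x i ^ 2) * ∑ i, y i ^ 2 :=
    Finset.sum_mul_sq_le_sq_mul_sq _ _ _
  have hA2 : ∑ i, x i ^ 2 = a ^ 2 := (l2_sq x).symm
  have hB2 : ∑ i, y i ^ 2 = b ^ 2 := (l2_sq y).symm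
  rw [hA2, hB2] at hCS
  have ht_le : t ≤ a * b := by nlinarith [mul_nonneg ha hb]
  -- expand sums
  have e1 : ∑ i, (sx * x i - sy * y i) ^ 2 =
      sx ^ 2 * (∑ i, x i ^ 2) + sy ^ 2 * (∑ i, y i ^ 2) - 2 * (sx * sy) * t := by
    rw [ht_def, Finset.mul_sum, Finset.mul_sum, Finset.mul_sum, ← Finset.sum_add_distrib,
      ← Finset.sum_sub_distrib]
    exact Finset.sum_congr rfl fun i _ => by ring
  have e2 : ∑ i, (x i - y i) ^ 2 =
      (∑ i, x i ^ 2) + (∑ i, y i ^ 2) - 2 * t := by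
    rw [ht_def, Finset.mul_sum, ← Finset.sum_add_distrib, ← Finset.sum_sub_distrib]
    exact Finset.sum_congr rfl fun i _ => by ring
  rw [hA2, hB2] at e1 e2
  -- min lipschitz
  have hpq : (sx * a - sy * b) ^ 2 ≤ (a - b) ^ 2 := by
    rw [hp, hq]
    have h1 : |min a B - min b B| ≤ |a - b| :=
      (abs_min_sub_min_le_max a B b B).trans (by simp [abs_nonneg])
    calc (min a B - min b B) ^ 2 = |min a B - min b B| ^ 2 := (sq_abs _).symm
      _ ≤ |a - b| ^ 2 := pow_le_pow_left₀ (abs_nonneg _) h1 2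
      _ = (a - b) ^ 2 := sq_abs _
  have key := scalar_key ha hb hsx0 hsx1 hsy0 hsy1 ht_le hpq
  -- conclude
  unfold l2
  apply Real.sqrt_le_sqrt
  have hfun : ∀ i, (sigma B x - sigma B y) i = sx * x i - sy * y i := by
    intro i; rw [Pi.sub_apply, hx, hy]; simp [smul_eq_mul]
  calc ∑ i, ((sigma B x - sigma B y) i) ^ 2 = ∑ i, (sx * x i - sy * y i) ^ 2 :=
        Finset.sum_congr rfl fun i _ => by rw [hfun i]
    _ ≤ ∑ i, (x i - y i) ^ 2 := by rw [e1, e2]; exact key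
    _ = ∑ i, ((x - y) i) ^ 2 := rfl

lemma frob_sigmaMat_sub {N m : ℕ} {B : ℝ} (hB : 0 < B)
    (M P : Matrix (Fin N) (Fin m) ℝ) :
    frobNorm (sigmaMat B M - sigmaMat B P) ≤ frobNorm (M - P) := by
  rw [frob_eq_cols, frob_eq_cols]
  apply Real.sqrt_le_sqrt
  refine Finset.sum_le_sum fun j _ => ?_
  have h1 : (fun i => (sigmaMat B M - sigmaMat B P) i j)
      = sigma B (fun k => M k j) - sigma B (fun k => P k j) := by
    ext i; simp [sigmaMat, Matrix.sub_apply]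
  have h2 : (fun i => (M - P) i j) = (fun k => M k j) - (fun k => P k j) := by
    ext i; simp [Matrix.sub_apply]
  rw [h1, h2]
  exact pow_le_pow_left₀ (l2_nonneg _) (sigma_lip hB _ _) 2

def IsOrthogonal {N : ℕ} (Φ : Matrix (Fin N) (Fin N) ℝ) : Prop := Φᵀ * Φ = 1

noncomputable def ista {n N m : ℕ} (A : Matrix (Fin n) (Fin N) ℝ) (τ lam : ℝ)
    (Φ : Matrix (Fin N) (Fin N) ℝ) (Y : Matrix (Fin n) (Fin m) ℝ) :
    ℕ → Matrix (Fin N) (Fin m) ℝ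
  | 0 => 0
  | l + 1 => softMat (τ * lam)
      ((1 - τ • (Φᵀ * Aᵀ * A * Φ)) * ista A τ lam Φ Y l + τ • ((A * Φ)ᵀ * Y))

-- conjugation identity
lemma conj_eq {n N : ℕ} (A : Matrix (Fin n) (Fin N) ℝ) (τ : ℝ)
    {Φ : Matrix (Fin N) (Fin N) ℝ} (hΦ : IsOrthogonal Φ) :
    1 - τ • (Φᵀ * Aᵀ * A * Φ) = Φᵀ * ((1 - τ • (Aᵀ * A)) * Φ) := by
  have hΦ' : Φᵀ * Φ = 1 := hΦ
  rw [Matrix.sub_mul, Matrix.mul_sub, one_mul, Matrix.smul_mul, Matrix.mul_smul, hΦ']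
  congr 1
  simp [Matrix.mul_assoc]

lemma spec_AΦ_le {n N : ℕ} (A : Matrix (Fin n) (Fin N) ℝ)
    {Φ : Matrix (Fin N) (Fin N) ℝ} (hΦ : IsOrthogonal Φ) :
    specNorm (A * Φ) ≤ specNorm A := by
  refine specNorm_le_bound _ (specNorm_nonneg _) fun x => ?_
  rw [← Matrix.mulVec_mulVec, ← l2_mulVec_orth hΦ x]
  exact l2_mulVec_le _ _

lemma transpose_orth {N : ℕ} {Φ : Matrix (Fin N) (Fin N) ℝ} (hΦ : IsOrthogonal Φ) :
    IsOrthogonal Φᵀ := by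
  unfold IsOrthogonal at *
  rw [Matrix.transpose_transpose]
  exact mul_eq_one_comm.mp hΦ

lemma frob_conj_mul_le {n N m : ℕ} (A : Matrix (Fin n) (Fin N) ℝ) (τ : ℝ)
    {Φ : Matrix (Fin N) (Fin N) ℝ} (hΦ : IsOrthogonal Φ)
    (X : Matrix (Fin N) (Fin m) ℝ) :
    frobNorm ((1 - τ • (Φᵀ * Aᵀ * A * Φ)) * X) ≤
      specNorm (1 - τ • (Aᵀ * A)) * frobNorm X := by
  rw [conj_eq A τ hΦ, Matrix.mul_assoc, frob_orth_mul (transpose_orth hΦ),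
    Matrix.mul_assoc]
  calc frobNorm ((1 - τ • (Aᵀ * A)) * (Φ * X))
      ≤ specNorm (1 - τ • (Aᵀ * A)) * frobNorm (Φ * X) := frob_mul_le _ _
    _ = specNorm (1 - τ • (Aᵀ * A)) * frobNorm X := by rw [frob_orth_mul hΦ]

lemma frob_data_term_le {n N m : ℕ} (A : Matrix (Fin n) (Fin N) ℝ) {τ : ℝ} (hτ : 0 < τ)
    {Φ : Matrix (Fin N) (Fin N) ℝ} (hΦ : IsOrthogonal Φ)
    (Y : Matrix (Fin n) (Fin m) ℝ) :
    frobNorm (τ • ((A * Φ)ᵀ * Y)) ≤ τ * specNorm A * frobNorm Y := by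
  rw [frob_smul, abs_of_pos hτ, mul_assoc]
  refine mul_le_mul_of_nonneg_left ?_ hτ.le
  calc frobNorm ((A * Φ)ᵀ * Y) ≤ specNorm ((A * Φ)ᵀ) * frobNorm Y := frob_mul_le _ _
    _ = specNorm (A * Φ) * frobNorm Y := by rw [specNorm_transpose]
    _ ≤ specNorm A * frobNorm Y :=
        mul_le_mul_of_nonneg_right (spec_AΦ_le A hΦ) (frob_nonneg _)

lemma ista_frob_le {n N m : ℕ} (A : Matrix (Fin n) (Fin N) ℝ) {τ lam : ℝ}
    (hτ : 0 < τ) (hlam : 0 < lam)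
    {Φ : Matrix (Fin N) (Fin N) ℝ} (hΦ : IsOrthogonal Φ)
    (Y : Matrix (Fin n) (Fin m) ℝ) (l : ℕ) :
    frobNorm (ista A τ lam Φ Y l) ≤
      τ * specNorm A * frobNorm Y *
        ∑ k ∈ Finset.range l, specNorm (1 - τ • (Aᵀ * A)) ^ k := by
  set ρ := specNorm (1 - τ • (Aᵀ * A)) with hρ_def
  have hρ : 0 ≤ ρ := specNorm_nonneg _
  have hμ : 0 ≤ τ * lam := le_of_lt (mul_pos hτ hlam)
  induction l with
  | zero => simp [ista, frob_zero]
  | succ l ih =>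
    have hstep : frobNorm (ista A τ lam Φ Y (l + 1)) ≤
        ρ * frobNorm (ista A τ lam Φ Y l) + τ * specNorm A * frobNorm Y := by
      calc frobNorm (ista A τ lam Φ Y (l + 1))
          ≤ frobNorm ((1 - τ • (Φᵀ * Aᵀ * A * Φ)) * ista A τ lam Φ Y l +
              τ • ((A * Φ)ᵀ * Y)) := frob_softMat hμ _
        _ ≤ frobNorm ((1 - τ • (Φᵀ * Aᵀ * A * Φ)) * ista A τ lam Φ Y l) +
              frobNorm (τ • ((A * Φ)ᵀ * Y)) := frob_add_le _ _
        _ ≤ ρ * frobNorm (ista A τ lam Φ Y l) + τ * specNorm A * frobNorm Y := by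
            gcongr
            · exact frob_conj_mul_le A τ hΦ _
            · exact frob_data_term_le A hτ hΦ Y
    rw [geom_sum_succ]
    calc frobNorm (ista A τ lam Φ Y (l + 1))
        ≤ ρ * frobNorm (ista A τ lam Φ Y l) + τ * specNorm A * frobNorm Y := hstep
      _ ≤ ρ * (τ * specNorm A * frobNorm Y * ∑ k ∈ Finset.range l, ρ ^ k) +
            τ * specNorm A * frobNorm Y := by gcongr
      _ = τ * specNorm A * frobNorm Y * (ρ * (∑ k ∈ Finset.range l, ρ ^ k) + 1) := by ring

noncomputable def KL {n N m : ℕ} (A : Matrix (Fin n) (Fin N) ℝ) (τ : ℝ)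
    (Y : Matrix (Fin n) (Fin m) ℝ) (L : ℕ) : ℝ :=
  τ * frobNorm Y * specNorm (1 - τ • (Aᵀ * A)) ^ (L - 1)
    + τ * frobNorm Y * ∑ l ∈ Finset.Icc 2 L,
        specNorm (1 - τ • (Aᵀ * A)) ^ (L - l) *
          (1 + 2 * τ * specNorm A ^ 2 *
            ∑ k ∈ Finset.range (l - 1), specNorm (1 - τ • (Aᵀ * A)) ^ k)

noncomputable def ML {n N m : ℕ} (A : Matrix (Fin n) (Fin N) ℝ) (τ : ℝ)
    (Y : Matrix (Fin n) (Fin m) ℝ) (L : ℕ) : ℝ :=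
  τ * specNorm A * frobNorm Y * ∑ k ∈ Finset.range L, specNorm (1 - τ • (Aᵀ * A)) ^ k

lemma KL_succ {n N m : ℕ} (A : Matrix (Fin n) (Fin N) ℝ) (τ : ℝ)
    (Y : Matrix (Fin n) (Fin m) ℝ) {l : ℕ} (hl : 1 ≤ l) :
    KL A τ Y (l + 1) = specNorm (1 - τ • (Aᵀ * A)) * KL A τ Y l
      + τ * frobNorm Y * (1 + 2 * τ * specNorm A ^ 2 *
          ∑ k ∈ Finset.range l, specNorm (1 - τ • (Aᵀ * A)) ^ k) := by
  set ρ := specNorm (1 - τ • (Aᵀ * A)) with hρ_def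
  unfold KL
  rw [Finset.sum_Icc_succ_top (by omega : 2 ≤ l + 1)]
  have h3 : ρ ^ (l + 1 - 1) = ρ * ρ ^ (l - 1) := by
    have he : l + 1 - 1 = (l - 1) + 1 := by omega
    rw [he, pow_succ]; ring
  have h2 : ∑ j ∈ Finset.Icc 2 l, ρ ^ (l + 1 - j) *
        (1 + 2 * τ * specNorm A ^ 2 * ∑ k ∈ Finset.range (j - 1), ρ ^ k)
      = ρ * ∑ j ∈ Finset.Icc 2 l, ρ ^ (l - j) *
        (1 + 2 * τ * specNorm A ^ 2 * ∑ k ∈ Finset.range (j - 1), ρ ^ k) := by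
    rw [Finset.mul_sum]
    refine Finset.sum_congr rfl fun j hj => ?_
    have hjl : j ≤ l := (Finset.mem_Icc.mp hj).2
    have : l + 1 - j = (l - j) + 1 := by omega
    rw [this, pow_succ]; ring
  have h4 : l + 1 - (l + 1) = 0 := by omega
  have h5 : l + 1 - 1 = l := by omega
  rw [h2, h3, h4, h5, pow_zero]
  ring

lemma data_diff_le {n N m : ℕ} (A : Matrix (Fin n) (Fin N) ℝ) {τ : ℝ} (hτ : 0 < τ)
    (Y : Matrix (Fin n) (Fin m) ℝ) (B₁ B₂ : Matrix (Fin n) (Fin N) ℝ) :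
    frobNorm (τ • (B₁ᵀ * Y) - τ • (B₂ᵀ * Y)) ≤
      τ * frobNorm Y * specNorm (B₁ - B₂) := by
  have h : τ • (B₁ᵀ * Y) - τ • (B₂ᵀ * Y) = τ • ((B₁ - B₂)ᵀ * Y) := by
    rw [Matrix.transpose_sub, Matrix.sub_mul, smul_sub]
  rw [h, frob_smul, abs_of_pos hτ]
  calc τ * frobNorm ((B₁ - B₂)ᵀ * Y)
      ≤ τ * (specNorm ((B₁ - B₂)ᵀ) * frobNorm Y) :=
        mul_le_mul_of_nonneg_left (frob_mul_le _ _) hτ.le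
    _ = τ * frobNorm Y * specNorm (B₁ - B₂) := by rw [specNorm_transpose]; ring

lemma matdiff_spec_le {n N : ℕ} (A : Matrix (Fin n) (Fin N) ℝ) {τ : ℝ} (hτ : 0 < τ)
    {Φ₁ Φ₂ : Matrix (Fin N) (Fin N) ℝ} (hΦ₁ : IsOrthogonal Φ₁) (hΦ₂ : IsOrthogonal Φ₂) :
    specNorm ((1 - τ • (Φ₁ᵀ * Aᵀ * A * Φ₁)) - (1 - τ • (Φ₂ᵀ * Aᵀ * A * Φ₂))) ≤
      2 * τ * specNorm A * specNorm (A * Φ₁ - A * Φ₂) := by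
  have hT : ∀ Φ : Matrix (Fin N) (Fin N) ℝ, Φᵀ * Aᵀ * A * Φ = (A * Φ)ᵀ * (A * Φ) := by
    intro Φ; rw [Matrix.transpose_mul]; simp [Matrix.mul_assoc]
  set B₁ := A * Φ₁
  set B₂ := A * Φ₂
  have h1 : (1 - τ • (Φ₁ᵀ * Aᵀ * A * Φ₁)) - (1 - τ • (Φ₂ᵀ * Aᵀ * A * Φ₂))
      = τ • (B₂ᵀ * B₂ - B₁ᵀ * B₁) := by
    rw [hT Φ₁, hT Φ₂, smul_sub]; abel
  have h2 : B₂ᵀ * B₂ - B₁ᵀ * B₁ = B₂ᵀ * (B₂ - B₁) + (B₂ - B₁)ᵀ * B₁ := by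
    rw [Matrix.mul_sub, Matrix.transpose_sub, Matrix.sub_mul]; abel
  have hneg : specNorm (B₂ - B₁) = specNorm (B₁ - B₂) := by
    rw [← specNorm_neg, neg_sub]
  rw [h1, h2, specNorm_smul, abs_of_pos hτ]
  have e1 : specNorm (B₂ᵀ * (B₂ - B₁)) ≤ specNorm A * specNorm (B₁ - B₂) := by
    calc specNorm (B₂ᵀ * (B₂ - B₁)) ≤ specNorm (B₂ᵀ) * specNorm (B₂ - B₁) :=
          specNorm_mul_le _ _
      _ = specNorm B₂ * specNorm (B₁ - B₂) := by rw [specNorm_transpose, hneg]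
      _ ≤ specNorm A * specNorm (B₁ - B₂) :=
          mul_le_mul_of_nonneg_right (spec_AΦ_le A hΦ₂) (specNorm_nonneg _)
  have e2 : specNorm ((B₂ - B₁)ᵀ * B₁) ≤ specNorm (B₁ - B₂) * specNorm A := by
    calc specNorm ((B₂ - B₁)ᵀ * B₁) ≤ specNorm ((B₂ - B₁)ᵀ) * specNorm B₁ :=
          specNorm_mul_le _ _
      _ = specNorm (B₁ - B₂) * specNorm B₁ := by rw [specNorm_transpose, hneg]
      _ ≤ specNorm (B₁ - B₂) * specNorm A :=
          mul_le_mul_of_nonneg_left (spec_AΦ_le A hΦ₁) (specNorm_nonneg _)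
  calc τ * specNorm (B₂ᵀ * (B₂ - B₁) + (B₂ - B₁)ᵀ * B₁)
      ≤ τ * (specNorm (B₂ᵀ * (B₂ - B₁)) + specNorm ((B₂ - B₁)ᵀ * B₁)) :=
        mul_le_mul_of_nonneg_left (specNorm_add_le _ _) hτ.le
    _ ≤ τ * (specNorm A * specNorm (B₁ - B₂) + specNorm (B₁ - B₂) * specNorm A) := by
        have := add_le_add e1 e2
        exact mul_le_mul_of_nonneg_left this hτ.le
    _ = 2 * τ * specNorm A * specNorm (B₁ - B₂) := by ring

lemma ista_diff_le {n N m : ℕ} (A : Matrix (Fin n) (Fin N) ℝ) {τ lam : ℝ}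
    (hτ : 0 < τ) (hlam : 0 < lam)
    {Φ₁ Φ₂ : Matrix (Fin N) (Fin N) ℝ} (hΦ₁ : IsOrthogonal Φ₁) (hΦ₂ : IsOrthogonal Φ₂)
    (Y : Matrix (Fin n) (Fin m) ℝ) :
    ∀ l : ℕ, 1 ≤ l →
      frobNorm (ista A τ lam Φ₁ Y l - ista A τ lam Φ₂ Y l) ≤
        KL A τ Y l * specNorm (A * Φ₁ - A * Φ₂) := by
  set ρ := specNorm (1 - τ • (Aᵀ * A)) with hρ_def
  have hρ : 0 ≤ ρ := specNorm_nonneg _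
  have hμ : 0 ≤ τ * lam := le_of_lt (mul_pos hτ hlam)
  set ΔB := specNorm (A * Φ₁ - A * Φ₂) with hΔB_def
  have hΔB : 0 ≤ ΔB := specNorm_nonneg _
  intro l hl
  induction l, hl using Nat.le_induction with
  | base =>
    have h1 : ista A τ lam Φ₁ Y 1 = softMat (τ * lam) (τ • ((A * Φ₁)ᵀ * Y)) := by
      show softMat (τ * lam) _ = _
      rw [show ista A τ lam Φ₁ Y 0 = 0 from rfl, Matrix.mul_zero, zero_add]
    have h2 : ista A τ lam Φ₂ Y 1 = softMat (τ * lam) (τ • ((A * Φ₂)ᵀ * Y)) := by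
      show softMat (τ * lam) _ = _
      rw [show ista A τ lam Φ₂ Y 0 = 0 from rfl, Matrix.mul_zero, zero_add]
    rw [h1, h2]
    have hKL : KL A τ Y 1 = τ * frobNorm Y := by
      unfold KL
      rw [Finset.Icc_eq_empty (by omega)]
      simp
    rw [hKL]
    calc frobNorm (softMat (τ * lam) (τ • ((A * Φ₁)ᵀ * Y)) -
            softMat (τ * lam) (τ • ((A * Φ₂)ᵀ * Y)))
        ≤ frobNorm (τ • ((A * Φ₁)ᵀ * Y) - τ • ((A * Φ₂)ᵀ * Y)) := frob_softMat_sub hμ _ _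
      _ ≤ τ * frobNorm Y * ΔB := data_diff_le A hτ Y _ _
  | succ l hl ih =>
    set X₁ := ista A τ lam Φ₁ Y l
    set X₂ := ista A τ lam Φ₂ Y l
    set M₁ := 1 - τ • (Φ₁ᵀ * Aᵀ * A * Φ₁) with hM₁
    set M₂ := 1 - τ • (Φ₂ᵀ * Aᵀ * A * Φ₂) with hM₂
    have hdecomp0 : ∀ (P Q : Matrix (Fin N) (Fin N) ℝ) (U V d₁ d₂ : Matrix (Fin N) (Fin m) ℝ),
        (P * U + d₁) - (Q * V + d₂) = P * (U - V) + (P - Q) * V + (d₁ - d₂) := by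
      intro P Q U V d₁ d₂
      rw [Matrix.mul_sub, Matrix.sub_mul]; abel
    have hdecomp : (M₁ * X₁ + τ • ((A * Φ₁)ᵀ * Y)) - (M₂ * X₂ + τ • ((A * Φ₂)ᵀ * Y))
        = M₁ * (X₁ - X₂) + (M₁ - M₂) * X₂ +
          (τ • ((A * Φ₁)ᵀ * Y) - τ • ((A * Φ₂)ᵀ * Y)) := hdecomp0 _ _ _ _ _ _
    have step1 : frobNorm (ista A τ lam Φ₁ Y (l + 1) - ista A τ lam Φ₂ Y (l + 1))
        ≤ frobNorm (M₁ * (X₁ - X₂)) + frobNorm ((M₁ - M₂) * X₂) +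
          frobNorm (τ • ((A * Φ₁)ᵀ * Y) - τ • ((A * Φ₂)ᵀ * Y)) := by
      calc frobNorm (ista A τ lam Φ₁ Y (l + 1) - ista A τ lam Φ₂ Y (l + 1))
          ≤ frobNorm ((M₁ * X₁ + τ • ((A * Φ₁)ᵀ * Y)) -
              (M₂ * X₂ + τ • ((A * Φ₂)ᵀ * Y))) := frob_softMat_sub hμ _ _
        _ = frobNorm (M₁ * (X₁ - X₂) + (M₁ - M₂) * X₂ +
              (τ • ((A * Φ₁)ᵀ * Y) - τ • ((A * Φ₂)ᵀ * Y))) := by rw [hdecomp]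
        _ ≤ frobNorm (M₁ * (X₁ - X₂) + (M₁ - M₂) * X₂) +
              frobNorm (τ • ((A * Φ₁)ᵀ * Y) - τ • ((A * Φ₂)ᵀ * Y)) := frob_add_le _ _
        _ ≤ frobNorm (M₁ * (X₁ - X₂)) + frobNorm ((M₁ - M₂) * X₂) +
              frobNorm (τ • ((A * Φ₁)ᵀ * Y) - τ • ((A * Φ₂)ᵀ * Y)) := by
            gcongr
            exact frob_add_le _ _
    have b1 : frobNorm (M₁ * (X₁ - X₂)) ≤ ρ * (KL A τ Y l * ΔB) := by
      calc frobNorm (M₁ * (X₁ - X₂)) ≤ ρ * frobNorm (X₁ - X₂) :=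
            frob_conj_mul_le A τ hΦ₁ _
        _ ≤ ρ * (KL A τ Y l * ΔB) := mul_le_mul_of_nonneg_left ih hρ
    have b2 : frobNorm ((M₁ - M₂) * X₂) ≤
        (2 * τ * specNorm A * ΔB) *
          (τ * specNorm A * frobNorm Y * ∑ k ∈ Finset.range l, ρ ^ k) := by
      calc frobNorm ((M₁ - M₂) * X₂) ≤ specNorm (M₁ - M₂) * frobNorm X₂ :=
            frob_mul_le _ _
        _ ≤ (2 * τ * specNorm A * ΔB) *
              (τ * specNorm A * frobNorm Y * ∑ k ∈ Finset.range l, ρ ^ k) := by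
            apply mul_le_mul (matdiff_spec_le A hτ hΦ₁ hΦ₂)
              (ista_frob_le A hτ hlam hΦ₂ Y l) (frob_nonneg _)
            exact mul_nonneg (mul_nonneg (mul_nonneg (by norm_num) hτ.le)
              (specNorm_nonneg _)) hΔB
    have b3 : frobNorm (τ • ((A * Φ₁)ᵀ * Y) - τ • ((A * Φ₂)ᵀ * Y)) ≤
        τ * frobNorm Y * ΔB := data_diff_le A hτ Y _ _
    have hKL := KL_succ A τ Y hl
    rw [← hρ_def] at hKL
    calc frobNorm (ista A τ lam Φ₁ Y (l + 1) - ista A τ lam Φ₂ Y (l + 1))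
        ≤ ρ * (KL A τ Y l * ΔB) +
            (2 * τ * specNorm A * ΔB) *
              (τ * specNorm A * frobNorm Y * ∑ k ∈ Finset.range l, ρ ^ k) +
            τ * frobNorm Y * ΔB := by
          refine le_trans step1 ?_
          gcongr
      _ = (ρ * KL A τ Y l + τ * frobNorm Y *
            (1 + 2 * τ * specNorm A ^ 2 * ∑ k ∈ Finset.range l, ρ ^ k)) * ΔB := by ring
      _ = KL A τ Y (l + 1) * ΔB := by rw [hKL]

noncomputable def istaVec {n N : ℕ} (A : Matrix (Fin n) (Fin N) ℝ) (τ lam : ℝ)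
    (Φ : Matrix (Fin N) (Fin N) ℝ) (y : Fin n → ℝ) : ℕ → Fin N → ℝ
  | 0 => 0
  | l + 1 => soft (τ * lam) ∘
      ((1 - τ • (Φᵀ * Aᵀ * A * Φ)) *ᵥ istaVec A τ lam Φ y l + τ • ((A * Φ)ᵀ *ᵥ y))

noncomputable def coveringNumber {α : Type*} (d : α → α → ℝ) (s : Set α) (ε : ℝ) : ℝ≥0∞ :=
  ⨅ (t : Finset α) (_ : ∀ x ∈ s, ∃ y ∈ t, d x y ≤ ε), (t.card : ℝ≥0∞)

theorem statement8 {n N m : ℕ} (A : Matrix (Fin n) (Fin N) ℝ)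
    (τ lam : ℝ) (hτ : 0 < τ) (hlam : 0 < lam)
    (Y : Matrix (Fin n) (Fin m) ℝ) (L : ℕ) (hL : 2 ≤ L) (Bout : ℝ) (hBout : 0 < Bout)
    (Φ₁ Φ₂ Ψ₁ Ψ₂ : Matrix (Fin N) (Fin N) ℝ)
    (hΦ₁ : IsOrthogonal Φ₁) (hΦ₂ : IsOrthogonal Φ₂)
    (hΨ₁ : IsOrthogonal Ψ₁) (hΨ₂ : IsOrthogonal Ψ₂) :
    frobNorm (sigmaMat Bout (Ψ₁ * ista A τ lam Φ₁ Y L) -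
              sigmaMat Bout (Ψ₂ * ista A τ lam Φ₂ Y L)) ≤
      ML A τ Y L * specNorm (Ψ₁ - Ψ₂) + KL A τ Y L * specNorm (A * Φ₁ - A * Φ₂) := by
  set X₁ := ista A τ lam Φ₁ Y L with hX₁
  set X₂ := ista A τ lam Φ₂ Y L with hX₂
  have hid : Ψ₁ * X₁ - Ψ₂ * X₂ = (Ψ₁ - Ψ₂) * X₁ + Ψ₂ * (X₁ - X₂) := by
    rw [Matrix.sub_mul, Matrix.mul_sub]; abel
  calc frobNorm (sigmaMat Bout (Ψ₁ * X₁) - sigmaMat Bout (Ψ₂ * X₂))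
      ≤ frobNorm (Ψ₁ * X₁ - Ψ₂ * X₂) := frob_sigmaMat_sub hBout _ _
    _ = frobNorm ((Ψ₁ - Ψ₂) * X₁ + Ψ₂ * (X₁ - X₂)) := by rw [hid]
    _ ≤ frobNorm ((Ψ₁ - Ψ₂) * X₁) + frobNorm (Ψ₂ * (X₁ - X₂)) := frob_add_le _ _
    _ ≤ specNorm (Ψ₁ - Ψ₂) * frobNorm X₁ + frobNorm (X₁ - X₂) := by
        rw [frob_orth_mul hΨ₂]
        gcongr
        exact frob_mul_le _ _
    _ ≤ specNorm (Ψ₁ - Ψ₂) * ML A τ Y L + KL A τ Y L * specNorm (A * Φ₁ - A * Φ₂) := by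
        refine add_le_add ?_ (ista_diff_le A hτ hlam hΦ₁ hΦ₂ Y L (by omega))
        exact mul_le_mul_of_nonneg_left (ista_frob_le A hτ hlam hΦ₁ Y L)
          (specNorm_nonneg _)
    _ = ML A τ Y L * specNorm (Ψ₁ - Ψ₂) + KL A τ Y L * specNorm (A * Φ₁ - A * Φ₂) := by
        rw [mul_comm]
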